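/- With the stiffness matrix entries z_{i,j} defined via the weighted left and right fractional integrals of the hat-function derivatives, the super-diagonal entries satisfy, for every 1 ≤ i ≤ I−2, z_{i,i+1} = ( b · h^{λ−1} / Γ(λ+1) ) · ( 3·(3/2)^λ·(1−γ) − 3·(1/2)^λ·(1−γ) − (5/2)^λ·(1−γ) − 2^{−λ}·γ ). -/

import Mathlib

open MeasureTheory intervalIntegral Real

/-- Left fractional integral operator of order `lam` on `[0,1]`:
`(I_L^λ f)(x) = (1/Γ(λ)) ∫_0^x (x−s)^{λ−1} f(s) ds`. -/
noncomputable def leftFracInt (lam : ℝ) (f : ℝ → ℝ) (x : ℝ) : ℝ :=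
  (1 / Real.Gamma lam) * ∫ s in (0:ℝ)..x, (x - s) ^ (lam - 1) * f s

/-- Right fractional integral operator of order `lam` on `[0,1]`:
`(I_R^λ f)(x) = (1/Γ(λ)) ∫_x^1 (s−x)^{λ−1} f(s) ds`. -/
noncomputable def rightFracInt (lam : ℝ) (f : ℝ → ℝ) (x : ℝ) : ℝ :=
  (1 / Real.Gamma lam) * ∫ s in x..(1:ℝ), (s - x) ^ (lam - 1) * f s

/-- The a.e. derivative `Dφ_j` of the hat function `φ_j` on a uniform grid with
spacing `h`: it equals `1/h` on `(x_{j-1}, x_j)`, `−1/h` on `(x_j, x_{j+1})`,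
and `0` elsewhere, where `x_k = k·h`. -/
noncomputable def hatDeriv (h : ℝ) (j : ℕ) (s : ℝ) : ℝ :=
  if ((j : ℝ) - 1) * h < s ∧ s < (j : ℝ) * h then 1 / h
  else if (j : ℝ) * h < s ∧ s < ((j : ℝ) + 1) * h then -1 / h
  else 0

/-- The stiffness matrix entry
`z_{i,j} = b·[(γ I_L^λ + (1−γ) I_R^λ)(Dφ_j)(x_{i−1/2}) − (γ I_L^λ + (1−γ) I_R^λ)(Dφ_j)(x_{i+1/2})]`,
where `x_{i±1/2} = (i ± 1/2)·h` are the midpoints of the grid cells. -/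
noncomputable def stiff (lam gam b h : ℝ) (i j : ℕ) : ℝ :=
  b * ((gam * leftFracInt lam (hatDeriv h j) (((i : ℝ) - 1 / 2) * h)
          + (1 - gam) * rightFracInt lam (hatDeriv h j) (((i : ℝ) - 1 / 2) * h))
        - (gam * leftFracInt lam (hatDeriv h j) (((i : ℝ) + 1 / 2) * h)
          + (1 - gam) * rightFracInt lam (hatDeriv h j) (((i : ℝ) + 1 / 2) * h)))

lemma auxR (lam : ℝ) (hlam : 0 < lam) (c a b k : ℝ) (hab : a ≤ b)
    (g : ℝ → ℝ) (hg : ∀ s ∈ Set.Ioo a b, g s = k) :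
    IntervalIntegrable (fun s => (s - c) ^ (lam - 1) * g s) volume a b ∧
      ∫ s in a..b, (s - c) ^ (lam - 1) * g s
        = k * ((b - c) ^ lam - (a - c) ^ lam) / lam := by
  have hr : (-1 : ℝ) < lam - 1 := by linarith
  have hbase : IntervalIntegrable (fun s : ℝ => (s - c) ^ (lam - 1)) volume a b := by
    simpa using (intervalIntegrable_rpow' (a := a - c) (b := b - c) hr).comp_sub_right c
  have hae : ∀ᵐ s ∂(volume : Measure ℝ), s ∈ Set.uIoc a b →
      (s - c) ^ (lam - 1) * k = (s - c) ^ (lam - 1) * g s := by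
    have hb0 : (volume : Measure ℝ) {b} = 0 := measure_singleton b
    filter_upwards [compl_mem_ae_iff.2 hb0] with s hs hmem
    rw [Set.uIoc_of_le hab] at hmem
    have hsb : s ≠ b := by simpa using hs
    rw [hg s ⟨hmem.1, lt_of_le_of_ne hmem.2 hsb⟩]
  constructor
  · refine (hbase.mul_const k).congr_ae ?_
    exact (ae_restrict_iff' measurableSet_uIoc).2 hae
  · rw [← intervalIntegral.integral_congr_ae hae, intervalIntegral.integral_mul_const,
      intervalIntegral.integral_comp_sub_right (fun u : ℝ => u ^ (lam - 1)) c,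
      integral_rpow (Or.inl hr)]
    have : lam - 1 + 1 = lam := by ring
    rw [this]; ring

lemma auxL (lam : ℝ) (hlam : 0 < lam) (c a b k : ℝ) (hab : a ≤ b)
    (g : ℝ → ℝ) (hg : ∀ s ∈ Set.Ioo a b, g s = k) :
    IntervalIntegrable (fun s => (c - s) ^ (lam - 1) * g s) volume a b ∧
      ∫ s in a..b, (c - s) ^ (lam - 1) * g s
        = k * ((c - a) ^ lam - (c - b) ^ lam) / lam := by
  have hr : (-1 : ℝ) < lam - 1 := by linarith
  have hbase : IntervalIntegrable (fun s : ℝ => (c - s) ^ (lam - 1)) volume a b := by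
    have := (intervalIntegrable_rpow' (a := c - a) (b := c - b) hr).comp_sub_left c
    simpa using this
  have hae : ∀ᵐ s ∂(volume : Measure ℝ), s ∈ Set.uIoc a b →
      (c - s) ^ (lam - 1) * k = (c - s) ^ (lam - 1) * g s := by
    have hb0 : (volume : Measure ℝ) {b} = 0 := measure_singleton b
    filter_upwards [compl_mem_ae_iff.2 hb0] with s hs hmem
    rw [Set.uIoc_of_le hab] at hmem
    have hsb : s ≠ b := by simpa using hs
    rw [hg s ⟨hmem.1, lt_of_le_of_ne hmem.2 hsb⟩]
  constructor
  · refine (hbase.mul_const k).congr_ae ?_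
    exact (ae_restrict_iff' measurableSet_uIoc).2 hae
  · rw [← intervalIntegral.integral_congr_ae hae, intervalIntegral.integral_mul_const,
      intervalIntegral.integral_comp_sub_left (fun u : ℝ => u ^ (lam - 1)) c,
      integral_rpow (Or.inl hr)]
    have : lam - 1 + 1 = lam := by ring
    rw [this]; ring


/-- Super-diagonal entries of the stiffness matrix. -/
theorem stiffness_superdiagonal
    (lam gam b : ℝ) (hlam0 : 0 < lam) (hlam1 : lam < 1)
    (hgam : gam ∈ Set.Icc (0:ℝ) 1) (hb : 0 < b)
    (I : ℕ) (hI : 3 ≤ I) (h : ℝ) (hh : h = 1 / (I : ℝ))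
    (i : ℕ) (hi1 : 1 ≤ i) (hi2 : i ≤ I - 2) :
    stiff lam gam b h i (i + 1)
      = (b * h ^ (lam - 1) / Real.Gamma (lam + 1))
        * (3 * (3 / 2 : ℝ) ^ lam * (1 - gam) - 3 * (1 / 2 : ℝ) ^ lam * (1 - gam)
            - (5 / 2 : ℝ) ^ lam * (1 - gam) - (2:ℝ) ^ (-lam) * gam) := by
  have hIpos : (0:ℝ) < I := by
    have : (3:ℝ) ≤ I := by exact_mod_cast hI
    linarith
  have hpos : 0 < h := by rw [hh]; positivity
  have hi1r : (1:ℝ) ≤ (i:ℝ) := by exact_mod_cast hi1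
  have hiI : ((i:ℝ) + 2) ≤ (I:ℝ) := by
    have : i + 2 ≤ I := by omega
    exact_mod_cast this
  have hC1 : ((i:ℝ) + 2) * h ≤ 1 := by
    rw [hh, mul_one_div, div_le_one hIpos]; exact hiI
  set f := hatDeriv h (i + 1) with hf
  -- hat function values
  have hv1 : ∀ s ∈ Set.Ioo ((i:ℝ) * h) (((i:ℝ) + 1) * h), f s = 1 / h := by
    intro s hs
    simp only [hf, hatDeriv, Nat.cast_add, Nat.cast_one, add_sub_cancel_right]
    rw [if_pos ⟨hs.1, hs.2⟩]
  have hv2 : ∀ s ∈ Set.Ioo (((i:ℝ) + 1) * h) (((i:ℝ) + 2) * h), f s = -1 / h := by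
    intro s hs
    have e1 : ((i:ℝ) + 1 + 1) * h = ((i:ℝ) + 2) * h := by ring
    have e2 : ((i:ℝ) + 1) * h = (i:ℝ) * h + h := by ring
    simp only [hf, hatDeriv, Nat.cast_add, Nat.cast_one, add_sub_cancel_right]
    have hs1 := hs.1; have hs2 := hs.2
    split_ifs with h1 h2
    · exfalso; linarith [h1.2]
    · rfl
    · exfalso
      push_neg at h2
      have := h2 hs1
      linarith
  have hv0a : ∀ s ∈ Set.Ioo (0:ℝ) ((i:ℝ) * h), f s = 0 := by
    intro s hs
    have e2 : ((i:ℝ) + 1) * h = (i:ℝ) * h + h := by ring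
    simp only [hf, hatDeriv, Nat.cast_add, Nat.cast_one, add_sub_cancel_right]
    have hs2 := hs.2
    split_ifs with h1 h2
    · exfalso; linarith [h1.1]
    · exfalso; linarith [h2.1]
    · rfl
  have hv0b : ∀ s ∈ Set.Ioo (((i:ℝ) + 2) * h) 1, f s = 0 := by
    intro s hs
    have e1 : ((i:ℝ) + 2) * h = ((i:ℝ) + 1) * h + h := by ring
    have e2 : ((i:ℝ) + 1) * h = (i:ℝ) * h + h := by ring
    have e3 : ((i:ℝ) + 1 + 1) * h = ((i:ℝ) + 2) * h := by ring
    simp only [hf, hatDeriv, Nat.cast_add, Nat.cast_one, add_sub_cancel_right]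
    have hs1 := hs.1
    split_ifs with h1 h2
    · exfalso; linarith [h1.2]
    · exfalso; linarith [h2.2]
    · rfl
  simp only [stiff]
  rw [← hf]
  set x1 : ℝ := ((i:ℝ) - 1 / 2) * h with hx1
  set x2 : ℝ := ((i:ℝ) + 1 / 2) * h with hx2
  have hx1nonneg : (0:ℝ) ≤ x1 := by
    rw [hx1]; nlinarith
  have hx1A : x1 ≤ (i:ℝ) * h := by rw [hx1]; nlinarith
  have hAx2 : (i:ℝ) * h ≤ x2 := by rw [hx2]; nlinarith
  have hx2B : x2 ≤ ((i:ℝ) + 1) * h := by rw [hx2]; nlinarith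
  have hAB : (i:ℝ) * h ≤ ((i:ℝ) + 1) * h := by nlinarith
  have hBC : ((i:ℝ) + 1) * h ≤ ((i:ℝ) + 2) * h := by nlinarith
  -- left at x1
  have L1 := auxL lam hlam0 x1 0 x1 0 hx1nonneg f
    (fun s hs => hv0a s ⟨hs.1, lt_of_lt_of_le hs.2 hx1A⟩)
  have hLeft1 : leftFracInt lam f x1 = 0 := by
    simp only [leftFracInt]
    rw [L1.2]; ring
  -- left at x2
  have L2a := auxL lam hlam0 x2 0 ((i:ℝ) * h) 0 (by nlinarith) f hv0a
  have L2b := auxL lam hlam0 x2 ((i:ℝ) * h) x2 (1 / h) hAx2 f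
    (fun s hs => hv1 s ⟨hs.1, lt_of_lt_of_le hs.2 hx2B⟩)
  have hLeft2 : leftFracInt lam f x2
      = (1 / Real.Gamma lam) * ((1 / h) * ((h / 2) ^ lam) / lam) := by
    simp only [leftFracInt]
    rw [← integral_add_adjacent_intervals L2a.1 L2b.1, L2a.2, L2b.2]
    have d1 : x2 - (i:ℝ) * h = h / 2 := by rw [hx2]; ring
    have d2 : x2 - x2 = 0 := by ring
    rw [d1, d2, Real.zero_rpow hlam0.ne']
    ring
  -- right at x1
  have R1a := auxR lam hlam0 x1 x1 ((i:ℝ) * h) 0 hx1A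
    (fun s => f s) (fun s hs => hv0a s ⟨lt_of_le_of_lt hx1nonneg hs.1, hs.2⟩)
  have R1b := auxR lam hlam0 x1 ((i:ℝ) * h) (((i:ℝ) + 1) * h) (1 / h) hAB f hv1
  have R1c := auxR lam hlam0 x1 (((i:ℝ) + 1) * h) (((i:ℝ) + 2) * h) (-1 / h) hBC f hv2
  have R1d := auxR lam hlam0 x1 (((i:ℝ) + 2) * h) 1 0 hC1 f hv0b
  have hRight1 : rightFracInt lam f x1
      = (1 / Real.Gamma lam) *
        ((1 / h) * (((3 / 2) * h) ^ lam - ((1 / 2) * h) ^ lam) / lam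
          + (-1 / h) * (((5 / 2) * h) ^ lam - ((3 / 2) * h) ^ lam) / lam) := by
    simp only [rightFracInt]
    rw [← integral_add_adjacent_intervals R1a.1 (R1b.1.trans (R1c.1.trans R1d.1)),
      ← integral_add_adjacent_intervals R1b.1 (R1c.1.trans R1d.1),
      ← integral_add_adjacent_intervals R1c.1 R1d.1,
      R1a.2, R1b.2, R1c.2, R1d.2]
    have d1 : (i:ℝ) * h - x1 = (1 / 2) * h := by rw [hx1]; ring
    have d2 : ((i:ℝ) + 1) * h - x1 = (3 / 2) * h := by rw [hx1]; ring
    have d3 : ((i:ℝ) + 2) * h - x1 = (5 / 2) * h := by rw [hx1]; ring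
    rw [d1, d2, d3]
    ring
  -- right at x2
  have R2a := auxR lam hlam0 x2 x2 (((i:ℝ) + 1) * h) (1 / h) hx2B
    (fun s => f s) (fun s hs => hv1 s ⟨lt_of_le_of_lt hAx2 hs.1, hs.2⟩)
  have R2b := auxR lam hlam0 x2 (((i:ℝ) + 1) * h) (((i:ℝ) + 2) * h) (-1 / h) hBC f hv2
  have R2c := auxR lam hlam0 x2 (((i:ℝ) + 2) * h) 1 0 hC1 f hv0b
  have hRight2 : rightFracInt lam f x2
      = (1 / Real.Gamma lam) *
        ((1 / h) * (((1 / 2) * h) ^ lam) / lam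
          + (-1 / h) * (((3 / 2) * h) ^ lam - ((1 / 2) * h) ^ lam) / lam) := by
    simp only [rightFracInt]
    rw [← integral_add_adjacent_intervals R2a.1 (R2b.1.trans R2c.1),
      ← integral_add_adjacent_intervals R2b.1 R2c.1,
      R2a.2, R2b.2, R2c.2]
    have d1 : ((i:ℝ) + 1) * h - x2 = (1 / 2) * h := by rw [hx2]; ring
    have d2 : x2 - x2 = 0 := by ring
    have d3 : ((i:ℝ) + 2) * h - x2 = (3 / 2) * h := by rw [hx2]; ring
    rw [d1, d2, d3, Real.zero_rpow hlam0.ne']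
    ring
  rw [hLeft1, hLeft2, hRight1, hRight2]
  -- algebra
  have e12 : ((1 / 2 : ℝ) * h) ^ lam = (1 / 2 : ℝ) ^ lam * h ^ lam :=
    Real.mul_rpow (by norm_num) hpos.le
  have e32 : ((3 / 2 : ℝ) * h) ^ lam = (3 / 2 : ℝ) ^ lam * h ^ lam :=
    Real.mul_rpow (by norm_num) hpos.le
  have e52 : ((5 / 2 : ℝ) * h) ^ lam = (5 / 2 : ℝ) ^ lam * h ^ lam :=
    Real.mul_rpow (by norm_num) hpos.le
  have eh2 : (h / 2 : ℝ) ^ lam = (1 / 2 : ℝ) ^ lam * h ^ lam := by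
    rw [show (h / 2 : ℝ) = (1 / 2) * h by ring]; exact e12
  have e2l : (2:ℝ) ^ (-lam) = (1 / 2 : ℝ) ^ lam := by
    rw [Real.rpow_neg (by norm_num : (0:ℝ) ≤ 2), one_div,
      Real.inv_rpow (by norm_num : (0:ℝ) ≤ 2)]
  have ehl : h ^ (lam - 1) = h ^ lam / h := by
    rw [Real.rpow_sub hpos, Real.rpow_one]
  have eG : Real.Gamma (lam + 1) = lam * Real.Gamma lam := Real.Gamma_add_one hlam0.ne'
  have hG : Real.Gamma lam ≠ 0 := (Real.Gamma_pos_of_pos hlam0).ne'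
  rw [e12, e32, e52, eh2, e2l, ehl, eG]
  field_simp
  ring
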